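/- A set A ⊆ ℕ is a set of pointwise recurrence if and only if for every B ⊆ ℕ with A ⊆ B there exists a finite set F ⊆ ℕ \ B such that the set B ∪ (B − F) is thick. -/

import Mathlib

/-- The set `A - n`, difference taken inside the positive integers:
`A - n = {m : m >= 1 and m + n ∈ A}`. -/
def NSub (A : Set ℕ) (n : ℕ) : Set ℕ := {m : ℕ | 0 < m ∧ m + n ∈ A}

/-- `S ⊆ ℕ` is thick if every finite subset of `ℕ` has a translate inside `S`. -/
def Thick (S : Set ℕ) : Prop :=
  ∀ F : Finset ℕ, ∃ n : ℕ, 0 < n ∧ ∀ f ∈ F, f + n ∈ S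

/-- A topological dynamical system: a nonempty compact metric space together with a
continuous self-map. -/
structure MetricDynSystem where
  carrier : Type
  [metric : MetricSpace carrier]
  [cpt : CompactSpace carrier]
  [carrier_nonempty : Nonempty carrier]
  map : carrier → carrier
  continuous_map : Continuous map

attribute [instance] MetricDynSystem.metric MetricDynSystem.cpt MetricDynSystem.carrier_nonempty

/-- A system is minimal if every point has dense forward orbit `{T^n x : n ∈ ℕ}`. -/
def MetricDynSystem.Minimal (S : MetricDynSystem) : Prop :=
  ∀ x : S.carrier, Dense {y : S.carrier | ∃ n : ℕ, 0 < n ∧ S.map^[n] x = y}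

/-- `A` is a set of pointwise recurrence: for every minimal system, every point `x` and
every open neighborhood `U` of `x`, some `n ∈ A` has `T^n x ∈ U`. -/
def PointwiseRecurrent (A : Set ℕ) : Prop :=
  ∀ S : MetricDynSystem, S.Minimal →
    ∀ (x : S.carrier) (U : Set S.carrier), IsOpen U → x ∈ U →
      ∃ n ∈ A, 0 < n ∧ S.map^[n] x ∈ U

namespace PR

/-- Return times to a nonempty open set in a minimal system are syndetic. -/
lemma minimal_syndetic (S : MetricDynSystem) (hmin : S.Minimal) (W : Set S.carrier)
    (hW : IsOpen W) (w0 : S.carrier) (hw0 : w0 ∈ W) :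
    ∃ N : ℕ, ∀ y : S.carrier, ∃ k : ℕ, 1 ≤ k ∧ k ≤ N ∧ S.map^[k] y ∈ W := by
  have hcover : (Set.univ : Set S.carrier) ⊆ ⋃ n : ℕ, (S.map^[n+1]) ⁻¹' W := by
    intro y _
    have hd := hmin y
    obtain ⟨z, hz, hzW⟩ := hd.exists_mem_open hW ⟨w0, hw0⟩
    obtain ⟨n, hn, hnz⟩ := hz
    obtain ⟨m, rfl⟩ := Nat.exists_eq_add_of_lt hn
    simp only [Set.mem_iUnion, Set.mem_preimage]
    exact ⟨m, by rw [show m+1 = 0+m+1 by omega, hnz]; exact hzW⟩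
  obtain ⟨t, ht⟩ := IsCompact.elim_finite_subcover (isCompact_univ)
    (fun n : ℕ => (S.map^[n+1]) ⁻¹' W)
    (fun n => (S.continuous_map.iterate (n+1)).isOpen_preimage W hW) hcover
  refine ⟨t.sup id + 1, fun y => ?_⟩
  have : y ∈ ⋃ n ∈ t, (S.map^[n+1]) ⁻¹' W := ht (Set.mem_univ y)
  simp only [Set.mem_iUnion, Set.mem_preimage] at this
  obtain ⟨n, hnt, hny⟩ := this
  exact ⟨n+1, Nat.succ_le_succ (Nat.zero_le n),
    Nat.succ_le_succ (Finset.le_sup (f := id) hnt), hny⟩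

lemma easy_dir (A : Set ℕ)
    (h : ∀ B : Set ℕ, A ⊆ B →
        ∃ F : Finset ℕ, (∀ f ∈ F, f ∉ B) ∧ Thick (B ∪ ⋃ f ∈ F, NSub B f)) :
    PointwiseRecurrent A := by
  intro S hmin x U hU hxU
  by_contra hno
  push_neg at hno
  set B : Set ℕ := A ∪ {n | 0 < n ∧ S.map^[n] x ∉ U} with hB
  obtain ⟨F, hFB, hThick⟩ := h B (fun a ha => Or.inl ha)
  -- for f ∈ F : f ∉ A and (f = 0 or map^[f] x ∈ U)
  have hFU : ∀ f ∈ F, S.map^[f] x ∈ U := by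
    intro f hf
    have := hFB f hf
    rw [hB] at this
    simp only [Set.mem_union, Set.mem_setOf_eq, not_or, not_and_or] at this
    rcases this.2 with h0 | hU'
    · have : f = 0 := by omega
      subst this; simpa using hxU
    · exact not_not.mp hU'
  -- the shrunken neighborhood
  set W : Set S.carrier := U ∩ ⋂ f ∈ F, (S.map^[f]) ⁻¹' U with hWdef
  have hWopen : IsOpen W := hU.inter (isOpen_biInter_finset (fun f _ =>
    ((S.continuous_map.iterate f).isOpen_preimage U hU)))
  have hxW : x ∈ W := by
    refine ⟨hxU, ?_⟩
    simp only [Set.mem_iInter, Set.mem_preimage]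
    exact fun f hf => hFU f hf
  obtain ⟨N, hsynd⟩ := minimal_syndetic S hmin W hWopen x hxW
  obtain ⟨n, hn, hthick⟩ := hThick (Finset.range (N+1))
  obtain ⟨k, hk1, hkN, hkW⟩ := hsynd (S.map^[n] x)
  rw [← Function.iterate_add_apply] at hkW
  have hmem := hthick k (Finset.mem_range.mpr (Nat.lt_succ_of_le hkN))
  have hkinU : S.map^[k+n] x ∈ U := hkW.1
  have hnotinB : ∀ m : ℕ, 0 < m → S.map^[m] x ∈ U → m ∉ B := by
    intro m hmpos hm
    rw [hB]
    rintro (hA | ⟨hpos, hnU⟩)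
    · exact (hno m hA hmpos) hm
    · exact hnU hm
  rcases hmem with hmB | hOther
  · exact hnotinB (k+n) (by omega) hkinU hmB
  · simp only [Set.mem_iUnion] at hOther
    obtain ⟨f, hfF, hpos, hfB⟩ := hOther
    have : S.map^[k+n+f] x ∈ U := by
      have := hkW.2
      simp only [Set.mem_iInter, Set.mem_preimage] at this
      have h2 := this f hfF
      rw [← Function.iterate_add_apply] at h2
      rw [show k+n+f = f + (k+n) by omega]
      exact h2
    exact hnotinB (k+n+f) (by omega) this hfB


end PR

namespace PR


/-- value of a word at position i (false beyond the end) -/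
def wrd (u : List Bool) (i : ℕ) : Bool := u.getD i false

variable (C : Set ℕ)

/-- `Qp w a g` : placing word `w` at absolute position `a+g` is admissible. -/
def Qp (w : List Bool) (a g : ℕ) : Prop :=
  0 < g ∧ (a + g) ∈ C ∧ ∀ i < w.length, wrd w i = true → a + g + i ∈ C

open Classical in
noncomputable def gam (w : List Bool) : ℕ :=
  if h : ∃ γ : ℕ, ∀ a : ℕ, ∃ g : ℕ, g ≤ γ ∧ Qp C w a g then h.choose else 0

open Classical in
noncomputable def pick (w : List Bool) (a : ℕ) : ℕ :=
  if h : ∃ g : ℕ, g ≤ gam C w ∧ Qp C w a g then h.choose else 1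

lemma pick_pos (w : List Bool) (a : ℕ) : 0 < pick C w a := by
  unfold pick
  split_ifs with h
  · exact h.choose_spec.2.1
  · norm_num

noncomputable def gmax (bs : List (List Bool)) : ℕ := (bs.map (gam C)).foldr max 0

lemma gmax_cons (w : List Bool) (bs : List (List Bool)) :
    gmax C (w :: bs) = max (gam C w) (gmax C bs) := rfl

noncomputable def fill : List (List Bool) → ℕ → ℕ → List Bool
  | [], _, n => List.replicate n false
  | (w :: rest), a, n =>
    if n < w.length + gmax C (w :: rest) + 1 then fill rest a n
    else (fill rest a (pick C w a)) ++ w ++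
      fill (w :: rest) (a + pick C w a + w.length) (n - pick C w a - w.length)
  termination_by bs _ n => (bs.length, n)
  decreasing_by
  · exact Prod.Lex.left _ _ (by simp)
  · exact Prod.Lex.left _ _ (by simp)
  · exact Prod.Lex.right _ (by
      have := pick_pos C w a
      omega)

noncomputable def blocks : ℕ → List (List Bool)
  | 0 => [[true]]
  | (k+1) =>
      let bs := blocks k
      let w := bs.headI
      (w ++ fill C bs w.length (pick C w w.length) ++ w) :: bs

noncomputable def W (k : ℕ) : List Bool := (blocks C k).headI

lemma blocks_succ (k : ℕ) :
    blocks C (k+1) =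
      (W C k ++ fill C (blocks C k) (W C k).length (pick C (W C k) (W C k).length)
        ++ W C k) :: blocks C k := rfl

lemma W_succ (k : ℕ) :
    W C (k+1) = W C k ++ fill C (blocks C k) (W C k).length
      (pick C (W C k) (W C k).length) ++ W C k := rfl

lemma W_zero : W C 0 = [true] := rfl

/-- the limit point -/
noncomputable def xpt (n : ℕ) : Bool := wrd (W C n) n


lemma pick_le (w : List Bool) (a : ℕ) : pick C w a ≤ gam C w + 1 := by
  unfold pick
  split_ifs with h
  · exact le_trans h.choose_spec.1 (Nat.le_succ _)
  · have : 1 ≤ gam C w + 1 := by omega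
    exact this

lemma fill_length : ∀ (bs : List (List Bool)) (a n : ℕ), (fill C bs a n).length = n := by
  intro bs
  induction bs with
  | nil => intro a n; simp [fill]
  | cons w rest ih =>
    intro a n
    induction n using Nat.strong_induction_on generalizing a with
    | _ n ihn =>
      rw [fill]
      split_ifs with h
      · exact ih a n
      · have hga : gam C w ≤ gmax C (w :: rest) := by
          rw [gmax_cons]; exact le_max_left _ _
        have hple := pick_le C w a
        have hpos := pick_pos C w a
        have hlt : n - pick C w a - w.length < n := by omega
        rw [List.length_append, List.length_append, ih, ihn _ hlt]
        omega

/-- all `true` positions of `w` are 0 or in `C` -/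
def wok (w : List Bool) : Prop := ∀ i, wrd w i = true → i = 0 ∨ i ∈ C

variable {C}

/-- the syndeticity hypothesis -/
def Hs : Prop :=
  ∀ F : Finset ℕ, (↑F : Set ℕ) ⊆ C →
    ∃ γ : ℕ, ∀ a : ℕ, ∃ g : ℕ, g ≤ γ ∧ 0 < g ∧ a + g ∈ C ∧ ∀ f ∈ F, a + g + f ∈ C

open Classical in
lemma gam_spec (hs : Hs (C := C)) {w : List Bool} (hw : wok C w) :
    ∀ a : ℕ, ∃ g : ℕ, g ≤ gam C w ∧ Qp C w a g := by
  classical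
  have hex : ∃ γ : ℕ, ∀ a : ℕ, ∃ g : ℕ, g ≤ γ ∧ Qp C w a g := by
    set F : Finset ℕ :=
      (Finset.range w.length).filter (fun i => wrd w i = true ∧ i ≠ 0) with hF
    have hFC : (↑F : Set ℕ) ⊆ C := by
      intro i hi
      simp only [hF, Finset.coe_filter, Set.mem_setOf_eq, Finset.mem_range] at hi
      rcases hw i hi.2.1 with h0 | hC
      · exact absurd h0 hi.2.2
      · exact hC
    obtain ⟨γ, hγ⟩ := hs F hFC
    refine ⟨γ, fun a => ?_⟩
    obtain ⟨g, hg, hgpos, hgC, hgF⟩ := hγ a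
    refine ⟨g, hg, hgpos, hgC, fun i hi hit => ?_⟩
    rcases Nat.eq_zero_or_pos i with rfl | hipos
    · simpa using hgC
    · exact hgF i (by
        simp only [hF, Finset.mem_filter, Finset.mem_range]
        exact ⟨hi, hit, by omega⟩)
  rw [gam, dif_pos hex]
  exact hex.choose_spec

open Classical in
lemma pick_spec (hs : Hs (C := C)) {w : List Bool} (hw : wok C w) (a : ℕ) :
    pick C w a ≤ gam C w ∧ Qp C w a (pick C w a) := by
  classical
  have hex : ∃ g : ℕ, g ≤ gam C w ∧ Qp C w a g := gam_spec hs hw a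
  rw [pick, dif_pos hex]
  exact hex.choose_spec

variable (C)

lemma Wlen_pos (k : ℕ) : 0 < (W C k).length := by
  induction k with
  | zero => simp [W_zero]
  | succ k ih => rw [W_succ]; simp only [List.length_append]; omega

lemma Wlen_succ (k : ℕ) :
    (W C (k+1)).length =
      2 * (W C k).length + pick C (W C k) (W C k).length := by
  rw [W_succ]
  simp only [List.length_append, fill_length]
  omega

lemma Wlen_ge (k : ℕ) : k + 1 ≤ (W C k).length := by
  induction k with
  | zero => simp [W_zero]
  | succ k ih =>
    have := Wlen_succ C k
    have := pick_pos C (W C k) (W C k).length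
    omega

lemma W_prefix_succ (k : ℕ) : W C k <+: W C (k+1) := by
  rw [W_succ]
  exact ⟨fill C (blocks C k) (W C k).length (pick C (W C k) (W C k).length) ++ W C k,
    by rw [List.append_assoc]⟩

lemma W_suffix_succ (k : ℕ) : W C k <:+ W C (k+1) := by
  rw [W_succ]
  exact ⟨W C k ++ fill C (blocks C k) (W C k).length (pick C (W C k) (W C k).length),
    by rw [List.append_assoc]⟩

lemma W_prefix {k m : ℕ} (h : k ≤ m) : W C k <+: W C m := by
  induction m with
  | zero => rw [Nat.le_zero.mp h]
  | succ m ih =>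
    rcases Nat.eq_or_lt_of_le h with rfl | hlt
    · exact List.prefix_refl _
    · exact (ih (by omega)).trans (W_prefix_succ C m)

lemma W_suffix {k m : ℕ} (h : k ≤ m) : W C k <:+ W C m := by
  induction m with
  | zero => rw [Nat.le_zero.mp h]
  | succ m ih =>
    rcases Nat.eq_or_lt_of_le h with rfl | hlt
    · exact List.suffix_refl _
    · exact (ih (by omega)).trans (W_suffix_succ C m)

lemma Wlen_mono {k m : ℕ} (h : k ≤ m) : (W C k).length ≤ (W C m).length :=
  (W_prefix C h).length_le

variable {C}

lemma wrd_append (u v : List Bool) (i : ℕ) :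
    wrd (u ++ v) i = if i < u.length then wrd u i else wrd v (i - u.length) := by
  unfold wrd
  split_ifs with h
  · exact List.getD_append _ _ _ _ h
  · exact List.getD_append_right _ _ _ _ (by omega)

lemma wrd_of_prefix {u v : List Bool} (h : u <+: v) {i : ℕ} (hi : i < u.length) :
    wrd v i = wrd u i := by
  obtain ⟨t, rfl⟩ := h
  rw [wrd_append, if_pos hi]

lemma wrd_ge (u : List Bool) {i : ℕ} (h : u.length ≤ i) : wrd u i = false := by
  unfold wrd
  exact List.getD_eq_default _ _ (by omega)

variable (C)

lemma xpt_eq (k : ℕ) {i : ℕ} (hi : i < (W C k).length) : xpt C i = wrd (W C k) i := by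
  unfold xpt
  rcases le_total i k with h | h
  · exact (wrd_of_prefix (W_prefix C h) (by have := Wlen_ge C i; omega)).symm.trans
      (wrd_of_prefix (W_prefix C (le_refl k)) (by omega)) |>.symm.symm
  · exact wrd_of_prefix (W_prefix C h) hi


/-- `v` occurs in `u` at position `s` (as an exact window). -/
def occ (u v : List Bool) (s : ℕ) : Prop :=
  s + v.length ≤ u.length ∧ ∀ i < v.length, wrd u (s + i) = wrd v i

lemma occ_appendL {u v : List Bool} {s : ℕ} (h : occ u v s) (u' : List Bool) :
    occ (u ++ u') v s := by
  have h1 := h.1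
  refine ⟨by simp only [List.length_append]; omega, fun i hi => ?_⟩
  rw [wrd_append, if_pos (by omega)]
  exact h.2 i hi

lemma occ_appendR {u' v : List Bool} {s : ℕ} (h : occ u' v s) (u : List Bool) :
    occ (u ++ u') v (u.length + s) := by
  have h1 := h.1
  refine ⟨by simp only [List.length_append]; omega, fun i hi => ?_⟩
  rw [wrd_append, if_neg (by omega)]
  have : u.length + s + i - u.length = s + i := by omega
  rw [this]
  exact h.2 i hi

lemma occ_of_prefix {u v : List Bool} (h : v <+: u) : occ u v 0 := by
  refine ⟨by simpa using h.length_le, fun i hi => ?_⟩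
  rw [Nat.zero_add]
  exact wrd_of_prefix h hi

lemma occ_refl (v : List Bool) : occ v v 0 := occ_of_prefix (List.prefix_refl v)

lemma occ_of_suffix {u v : List Bool} (h : v <:+ u) :
    occ u v (u.length - v.length) := by
  obtain ⟨t, rfl⟩ := h
  have : (t ++ v).length - v.length = t.length + 0 := by simp
  rw [this]
  exact occ_appendR (occ_refl v) t

lemma wrd_replicate (n i : ℕ) : wrd (List.replicate n false) i = false := by
  unfold wrd
  rcases lt_or_ge i n with h | h
  · rw [List.getD_eq_getElem _ _ (by simpa using h)]
    simp
  · exact List.getD_eq_default _ _ (by simpa using h)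

variable {C}

lemma fill_ok (hs : Hs (C := C)) :
    ∀ (bs : List (List Bool)), (∀ w ∈ bs, wok C w) →
      ∀ (a n i : ℕ), wrd (fill C bs a n) i = true → (a + i) ∈ C := by
  intro bs
  induction bs with
  | nil => intro _ a n i hi; rw [fill, wrd_replicate] at hi; exact absurd hi (by simp)
  | cons w rest ih =>
    intro hbs a n
    have hwok : wok C w := hbs w (List.mem_cons_self)
    have hrest : ∀ w' ∈ rest, wok C w' := fun w' hw' => hbs w' (List.mem_cons_of_mem _ hw')
    induction n using Nat.strong_induction_on generalizing a with
    | _ n ihn =>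
      intro i hi
      rw [fill] at hi
      split_ifs at hi with h
      · exact ih hrest a n i hi
      · obtain ⟨hgle, hQ⟩ := pick_spec hs hwok a
        set g := pick C w a with hg
        rw [wrd_append, wrd_append] at hi
        rw [List.length_append, fill_length] at hi
        split_ifs at hi with h1 h2
        · exact ih hrest a g i hi
        · have := hQ.2.2 (i - g) (by omega) hi
          have heq : a + g + (i - g) = a + i := by omega
          rwa [heq] at this
        · have hlt : n - g - w.length < n := by
            have := pick_pos C w a
            omega
          have := ihn _ hlt (a + g + w.length) (i - (g + w.length)) hi
          have heq : a + g + w.length + (i - (g + w.length)) = a + i := by omega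
          rwa [heq] at this

lemma W_mem_blocks (k : ℕ) : W C k ∈ blocks C k := by
  cases k with
  | zero => exact List.mem_cons_self
  | succ k => rw [blocks_succ]; exact List.mem_cons_self

lemma blocks_wok (hs : Hs (C := C)) : ∀ k, ∀ w ∈ blocks C k, wok C w := by
  intro k
  induction k with
  | zero =>
    intro w hw
    simp only [blocks] at hw
    rw [List.mem_singleton] at hw
    subst hw
    intro i hi
    cases i with
    | zero => exact Or.inl rfl
    | succ i => rw [wrd_ge _ (by simp)] at hi; exact absurd hi (by simp)
  | succ k ih =>
    intro w hw
    rw [blocks_succ] at hw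
    rcases List.mem_cons.mp hw with rfl | h
    · -- the new block
      have hwk : wok C (W C k) := ih _ (W_mem_blocks k)
      set L := (W C k).length with hL
      obtain ⟨hgle, hQ⟩ := pick_spec hs hwk L
      set g := pick C (W C k) L with hg
      intro i hi
      rw [wrd_append, wrd_append, List.length_append, fill_length] at hi
      split_ifs at hi with h1 h2
      · exact hwk i hi
      · right
        have := fill_ok hs (blocks C k) ih L g (i - L) hi
        have heq : L + (i - L) = i := by omega
        rwa [heq] at this
      · right
        have hilt : i - (L + g) < (W C k).length := by
          by_contra hc
          push_neg at hc
          rw [wrd_ge _ hc] at hi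
          exact absurd hi (by simp)
        have := hQ.2.2 (i - (L + g)) hilt hi
        have heq : L + g + (i - (L + g)) = i := by omega
        rwa [heq] at this
    · exact ih w h


variable (C)

/-- threshold at level `m` : the `fill` function with blocks list `blocks C m`
places a copy of `W C m` iff the length is at least `Tc C m`. -/
noncomputable def Tc (m : ℕ) : ℕ := (W C m).length + gmax C (blocks C m) + 1

noncomputable def TLc (j : ℕ) : ℕ := Tc C j + (W C j).length

noncomputable def Kc (j : ℕ) : ℕ := 3 * TLc C j

lemma blocks_cons (m : ℕ) : blocks C m = W C m :: (blocks C m).tail := by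
  cases m with
  | zero => rfl
  | succ m => rw [blocks_succ]; rfl

lemma blocks_tail_succ (m : ℕ) : (blocks C (m+1)).tail = blocks C m := by
  rw [blocks_succ]
  rfl

lemma fill_delegate {m : ℕ} (a n : ℕ) (h : n < Tc C m) :
    fill C (blocks C m) a n = fill C (blocks C m).tail a n := by
  conv_lhs => rw [blocks_cons]
  rw [fill, if_pos]
  rw [← blocks_cons]
  exact h

lemma fill_place {m : ℕ} (a n : ℕ) (h : Tc C m ≤ n) :
    fill C (blocks C m) a n =
      fill C (blocks C m).tail a (pick C (W C m) a) ++ W C m ++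
        fill C (blocks C m) (a + pick C (W C m) a + (W C m).length)
          (n - pick C (W C m) a - (W C m).length) := by
  conv_lhs => rw [blocks_cons]
  rw [fill, if_neg]
  · rw [← blocks_cons]
  · rw [← blocks_cons]
    unfold Tc at h
    omega

lemma gam_le_gmax (m : ℕ) : gam C (W C m) ≤ gmax C (blocks C m) := by
  conv_rhs => rw [blocks_cons]
  rw [gmax_cons]
  exact le_max_left _ _

variable {C} in
lemma pick_lt_Tc (hs : Hs (C := C)) (m a : ℕ) :
    pick C (W C m) a + (W C m).length < Tc C m := by
  have h1 := (pick_spec hs (blocks_wok hs m _ (W_mem_blocks m)) a).1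
  have h2 := gam_le_gmax C m
  unfold Tc
  omega

lemma Tc_ge (j : ℕ) : (W C j).length + 1 ≤ Tc C j := by unfold Tc; omega

section Claims

variable {C}
variable (hs : Hs (C := C)) (j : ℕ)

/-- occurrence of `W j` near the start of a fill -/
def ClL (m a n : ℕ) : Prop :=
  Tc C j ≤ n → ∃ s, s + (W C j).length ≤ TLc C j ∧ occ (fill C (blocks C m) a n) (W C j) s

/-- occurrence of `W j` near the end of a fill -/
def ClR (m a n : ℕ) : Prop :=
  Tc C j ≤ n → ∃ s, n ≤ s + TLc C j ∧ occ (fill C (blocks C m) a n) (W C j) s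

/-- occurrence of `W j` in every window of a fill -/
def ClS (m a n : ℕ) : Prop :=
  ∀ t, t + Kc C j ≤ n → ∃ s, t ≤ s ∧ s + (W C j).length ≤ t + Kc C j ∧
    occ (fill C (blocks C m) a n) (W C j) s

/-- occurrence of `W j` in every window of `W m` -/
def ClW (m : ℕ) : Prop :=
  ∀ t, t + Kc C j ≤ (W C m).length → ∃ s, t ≤ s ∧ s + (W C j).length ≤ t + Kc C j ∧
    occ (W C m) (W C j) s

lemma occ_left3 {X v : List Bool} {s : ℕ} (h : occ X v s) (Y Z : List Bool) :
    occ (X ++ Y ++ Z) v s := occ_appendL (occ_appendL h Y) Z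

lemma occ_mid3 {Y v : List Bool} {s : ℕ} (h : occ Y v s) (X Z : List Bool) :
    occ (X ++ Y ++ Z) v (X.length + s) := occ_appendL (occ_appendR h X) Z

lemma occ_right3 {Z v : List Bool} {s : ℕ} (h : occ Z v s) (X Y : List Bool) :
    occ (X ++ Y ++ Z) v (X.length + Y.length + s) := by
  have := occ_appendR h (X ++ Y)
  rwa [List.length_append] at this

include hs in
theorem claims : ∀ m, j ≤ m → ClW (C := C) j m ∧ ∀ a n,
    ClL (C := C) j m a n ∧ ClR (C := C) j m a n ∧ ClS (C := C) j m a n := by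
  have hT : (W C j).length + 1 ≤ Tc C j := Tc_ge C j
  have hTL : TLc C j = Tc C j + (W C j).length := rfl
  have hK : Kc C j = 3 * TLc C j := rfl
  intro m
  induction m using Nat.strong_induction_on with
  | _ m IH =>
    intro hjm
    have hLjm : (W C j).length ≤ (W C m).length := Wlen_mono C hjm
    -- ===== the SW part =====
    have hSW : ClW (C := C) j m := by
      rcases Nat.eq_or_lt_of_le hjm with rfl | hjlt
      · -- m = j : vacuous, windows of length Kc don't fit in W j
        intro t ht
        omega
      · -- m = m' + 1
        obtain ⟨m', rfl⟩ : ∃ m', m = m' + 1 := ⟨m - 1, by omega⟩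
        have hjm' : j ≤ m' := by omega
        obtain ⟨hSW', hFill'⟩ := IH m' (by omega) hjm'
        set L' := (W C m').length with hL'
        set g' := pick C (W C m') L' with hg'
        set M := fill C (blocks C m') L' g' with hM
        have hMlen : M.length = g' := fill_length C _ _ _
        have hWm : W C (m' + 1) = W C m' ++ M ++ W C m' := W_succ C m'
        have hWmlen : (W C (m' + 1)).length = L' + g' + L' := by
          rw [hWm]; simp only [List.length_append, hMlen]; try omega
        have hLjm' : (W C j).length ≤ L' := Wlen_mono C hjm'
        set Lj := (W C j).length with hLj
        intro t ht
        rw [hWmlen] at ht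
        rw [hWm]
        by_cases hc1 : t + Kc C j ≤ L'
        · obtain ⟨s, hs1, hs2, hocc⟩ := hSW' t hc1
          exact ⟨s, hs1, hs2, occ_left3 hocc M (W C m')⟩
        · by_cases hc2 : L' + g' ≤ t
          · obtain ⟨s, hs1, hs2, hocc⟩ := hSW' (t - (L' + g')) (by omega)
            refine ⟨L' + g' + s, by omega, by omega, ?_⟩
            have := occ_right3 hocc (W C m') M
            rwa [hMlen, show L' + g' + s = (W C m').length + g' + s by rw [← hL']] at this
          · by_cases hc3 : L' ≤ t ∧ t + Kc C j ≤ L' + g'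
            · obtain ⟨_, hL'', hR'', hS''⟩ := And.intro trivial (hFill' L' g')
              obtain ⟨s, hs1, hs2, hocc⟩ := hS'' (t - L') (by omega)
              refine ⟨L' + s, by omega, by omega, ?_⟩
              have := occ_mid3 hocc (W C m') (W C m')
              rwa [← hM, ← hL'] at this
            · by_cases hc4 : t ≤ L' ∧ L' + g' ≤ t + Kc C j
              · -- window contains M
                by_cases hd1 : Lj ≤ L' - t
                · -- suffix copy of the first W m'
                  refine ⟨L' - Lj, by omega, by omega, ?_⟩
                  have hocc : occ (W C m') (W C j) (L' - Lj) := by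
                    have := occ_of_suffix (W_suffix C hjm')
                    rwa [← hL', ← hLj] at this
                  exact occ_left3 hocc M (W C m')
                · by_cases hd2 : Lj ≤ t + Kc C j - (L' + g')
                  · -- prefix copy of the last W m'
                    refine ⟨L' + g', by omega, by omega, ?_⟩
                    have hocc : occ (W C m') (W C j) 0 := occ_of_prefix (W_prefix C hjm')
                    have := occ_right3 hocc (W C m') M
                    rwa [hMlen, ← hL', Nat.add_zero] at this
                  · -- middle fill is long : ClL on M
                    have hg'T : Tc C j ≤ g' := by omega
                    obtain ⟨s, hs1, hocc⟩ := (hFill' L' g').1 hg'T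
                    refine ⟨L' + s, by omega, by omega, ?_⟩
                    have := occ_mid3 hocc (W C m') (W C m')
                    rwa [← hM, ← hL'] at this
              · by_cases hc5 : t ≤ L'
                · -- straddles first W m' and M ; t+K < L'+g', L' < t+K
                  by_cases he1 : Tc C j + Lj ≤ t + Kc C j - L'
                  · obtain ⟨s, hs1, hocc⟩ := (hFill' L' g').1 (by omega)
                    refine ⟨L' + s, by omega, by omega, ?_⟩
                    have := occ_mid3 hocc (W C m') (W C m')
                    rwa [← hM, ← hL'] at this
                  · -- suffix copy of first W m'
                    refine ⟨L' - Lj, by omega, by omega, ?_⟩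
                    have hocc : occ (W C m') (W C j) (L' - Lj) := by
                      have := occ_of_suffix (W_suffix C hjm')
                      rwa [← hL', ← hLj] at this
                    exact occ_left3 hocc M (W C m')
                · -- straddles M and last W m' : L' < t < L'+g' < t+K
                  by_cases hf1 : Lj ≤ t + Kc C j - (L' + g')
                  · refine ⟨L' + g', by omega, by omega, ?_⟩
                    have hocc : occ (W C m') (W C j) 0 := occ_of_prefix (W_prefix C hjm')
                    have := occ_right3 hocc (W C m') M
                    rwa [hMlen, ← hL', Nat.add_zero] at this
                  · -- ClR on M
                    obtain ⟨s, hs1, hocc⟩ := (hFill' L' g').2.1 (by omega)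
                    have hsend := hocc.1
                    rw [fill_length] at hsend
                    refine ⟨L' + s, by omega, by omega, ?_⟩
                    have := occ_mid3 hocc (W C m') (W C m')
                    rwa [← hM, ← hL'] at this
    refine ⟨hSW, ?_⟩
    -- ===== the fill part =====
    intro a n
    induction n using Nat.strong_induction_on generalizing a with
    | _ n IHn =>
      by_cases hn : n < Tc C m
      · -- delegation case
        rcases Nat.eq_or_lt_of_le hjm with rfl | hjlt
        · -- m = j and n < Tc j : all hypotheses are contradictory
          refine ⟨fun h => absurd h (by omega), fun h => absurd h (by omega), fun t ht => ?_⟩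
          exact absurd ht (by omega)
        · obtain ⟨m', rfl⟩ : ∃ m', m = m' + 1 := ⟨m - 1, by omega⟩
          have heq : fill C (blocks C (m' + 1)) a n = fill C (blocks C m') a n := by
            rw [fill_delegate C a n hn, blocks_tail_succ]
          obtain ⟨hL', hR', hS'⟩ := (IH m' (by omega) (by omega)).2 a n
          refine ⟨?_, ?_, ?_⟩
          · intro h; obtain ⟨s, h1, h2⟩ := hL' h; exact ⟨s, h1, heq ▸ h2⟩
          · intro h; obtain ⟨s, h1, h2⟩ := hR' h; exact ⟨s, h1, heq ▸ h2⟩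
          · intro t ht; obtain ⟨s, h1, h2, h3⟩ := hS' t ht; exact ⟨s, h1, h2, heq ▸ h3⟩
      · -- placement case
        push_neg at hn
        set Lm := (W C m).length with hLm
        set g := pick C (W C m) a with hg
        set FL := fill C (blocks C m).tail a g with hFL
        set FR := fill C (blocks C m) (a + g + Lm) (n - g - Lm) with hFR
        have heq : fill C (blocks C m) a n = FL ++ W C m ++ FR := fill_place C a n hn
        have hFLlen : FL.length = g := fill_length C _ _ _
        have hFRlen : FR.length = n - g - Lm := fill_length C _ _ _
        have hgT : g + Lm < Tc C m := pick_lt_Tc hs m a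
        have hgn : g + Lm < n := by omega
        have hLmpos : 0 < Lm := Wlen_pos C m
        set Lj := (W C j).length with hLj
        have hWprefix : occ (W C m) (W C j) 0 := occ_of_prefix (W_prefix C hjm)
        have hWsuffix : occ (W C m) (W C j) (Lm - Lj) := by
          have := occ_of_suffix (W_suffix C hjm)
          rwa [← hLm, ← hLj] at this
        -- facts about the delegated list in case j < m
        have hsub : ∀ m', m = m' + 1 → j < m →
            (∀ a' n', ClL (C := C) j m' a' n' ∧ ClR (C := C) j m' a' n' ∧
              ClS (C := C) j m' a' n') := by
          intro m' hmeq hjlt'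
          subst hmeq
          exact fun a' n' => (IH m' (by omega) (by omega)).2 a' n'
        refine ⟨?_, ?_, ?_⟩
        -- ClL
        · intro hTn
          rw [heq]
          by_cases hgTj : Tc C j ≤ g
          · rcases Nat.eq_or_lt_of_le hjm with rfl | hjlt
            · omega
            · obtain ⟨m', rfl⟩ : ∃ m', m = m' + 1 := ⟨m - 1, by omega⟩
              obtain ⟨s, h1, h2⟩ := ((hsub m' rfl (by omega)) a g).1 (by omega)
              exact ⟨s, h1, occ_left3 h2 (W C (m' + 1)) FR⟩
          · refine ⟨g, by omega, ?_⟩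
            have := occ_mid3 hWprefix FL FR
            rwa [hFLlen, Nat.add_zero] at this
        -- ClR
        · intro hTn
          rw [heq]
          by_cases hn'T : Tc C j ≤ n - g - Lm
          · obtain ⟨s, h1, h2⟩ := (IHn (n - g - Lm) (by omega) (a + g + Lm)).2.1 hn'T
            refine ⟨g + Lm + s, by omega, ?_⟩
            have := occ_right3 (hFR ▸ h2) FL (W C m)
            rwa [hFLlen, ← hLm] at this
          · refine ⟨g + (Lm - Lj), by omega, ?_⟩
            have := occ_mid3 hWsuffix FL FR
            rwa [hFLlen] at this
        -- ClS
        · intro t ht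
          rw [heq]
          by_cases hc1 : t + Kc C j ≤ g
          · rcases Nat.eq_or_lt_of_le hjm with rfl | hjlt
            · omega
            · obtain ⟨m', rfl⟩ : ∃ m', m = m' + 1 := ⟨m - 1, by omega⟩
              obtain ⟨s, h1, h2, h3⟩ := ((hsub m' rfl (by omega)) a g).2.2 t (by omega)
              exact ⟨s, h1, h2, occ_left3 h3 (W C (m' + 1)) FR⟩
          · by_cases hc2 : g + Lm ≤ t
            · obtain ⟨s, h1, h2, h3⟩ :=
                (IHn (n - g - Lm) (by omega) (a + g + Lm)).2.2 (t - (g + Lm)) (by omega)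
              refine ⟨g + Lm + s, by omega, by omega, ?_⟩
              have := occ_right3 (hFR ▸ h3) FL (W C m)
              rwa [hFLlen, ← hLm] at this
            · by_cases hc3 : g ≤ t ∧ t + Kc C j ≤ g + Lm
              · obtain ⟨s, h1, h2, h3⟩ := hSW (t - g) (by omega)
                refine ⟨g + s, by omega, by omega, ?_⟩
                have := occ_mid3 h3 FL FR
                rwa [hFLlen] at this
              · by_cases hc4 : t ≤ g ∧ g + Lm ≤ t + Kc C j
                · -- window contains the W m copy : prefix copy at g
                  refine ⟨g, by omega, by omega, ?_⟩
                  have := occ_mid3 hWprefix FL FR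
                  rwa [hFLlen, Nat.add_zero] at this
                · by_cases hc5 : t ≤ g
                  · -- straddles FL and W m
                    by_cases he1 : Lj ≤ t + Kc C j - g
                    · refine ⟨g, by omega, by omega, ?_⟩
                      have := occ_mid3 hWprefix FL FR
                      rwa [hFLlen, Nat.add_zero] at this
                    · -- ClR on FL ; needs j < m
                      rcases Nat.eq_or_lt_of_le hjm with rfl | hjlt
                      · omega
                      · obtain ⟨m', rfl⟩ : ∃ m', m = m' + 1 := ⟨m - 1, by omega⟩
                        obtain ⟨s, h1, h2⟩ := ((hsub m' rfl (by omega)) a g).2.1 (by omega)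
                        have hsend := h2.1
                        rw [fill_length] at hsend
                        refine ⟨s, by omega, by omega, ?_⟩
                        exact occ_left3 h2 (W C (m' + 1)) FR
                  · -- straddles W m and FR : g < t < g + Lm < t + K
                    by_cases hf1 : Lj ≤ g + Lm - t
                    · -- suffix copy of W m
                      refine ⟨g + (Lm - Lj), by omega, by omega, ?_⟩
                      have := occ_mid3 hWsuffix FL FR
                      rwa [hFLlen] at this
                    · -- ClL on FR
                      obtain ⟨s, h1, h2⟩ :=
                        (IHn (n - g - Lm) (by omega) (a + g + Lm)).1 (by omega)
                      refine ⟨g + Lm + s, by omega, by omega, ?_⟩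
                      have := occ_right3 (hFR ▸ h2) FL (W C m)
                      rwa [hFLlen, ← hLm] at this

end Claims


variable {C}

lemma xpt_zero : xpt C 0 = true := rfl

lemma xpt_supp (hs : Hs (C := C)) (n : ℕ) (hn : 0 < n) (ht : xpt C n = true) : n ∈ C := by
  unfold xpt at ht
  rcases blocks_wok hs n (W C n) (W_mem_blocks n) n ht with h0 | hC
  · omega
  · exact hC

/-- the point `xpt` is uniformly recurrent : every prefix occurs syndetically. -/
theorem xpt_ur (hs : Hs (C := C)) (L : ℕ) :
    ∃ K : ℕ, ∀ t : ℕ, ∃ s : ℕ, t ≤ s ∧ s + L ≤ t + K ∧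
      ∀ i < L, xpt C (s + i) = xpt C i := by
  refine ⟨Kc C L, fun t => ?_⟩
  set m := max L (t + Kc C L) with hm
  have hjm : L ≤ m := le_max_left _ _
  have hLm : t + Kc C L ≤ (W C m).length := by
    have h1 := Wlen_ge C m
    have h2 : t + Kc C L ≤ m := le_max_right _ _
    omega
  obtain ⟨s, hs1, hs2, hocc⟩ := (claims hs L m hjm).1 t hLm
  have hLL : L ≤ (W C L).length := by have := Wlen_ge C L; omega
  refine ⟨s, hs1, by omega, fun i hi => ?_⟩
  have h1 : xpt C (s + i) = wrd (W C m) (s + i) := by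
    apply xpt_eq
    have := hocc.1
    omega
  have h2 : xpt C i = wrd (W C L) i := xpt_eq C L (by omega)
  rw [h1, h2]
  exact hocc.2 i (by omega)



abbrev Om := ℕ → Bool

def shift (z : Om) : Om := fun n => z (n + 1)

lemma shift_iterate (k : ℕ) (z : Om) (m : ℕ) : (shift^[k] z) m = z (m + k) := by
  induction k generalizing z m with
  | zero => simp
  | succ k ih =>
    rw [Function.iterate_succ_apply, ih]
    rfl

lemma continuous_shift : Continuous shift :=
  continuous_pi (fun n => continuous_apply (n + 1))

lemma cylinder_open (w : Om) (L : ℕ) : IsOpen {v : Om | ∀ i < L, v i = w i} := by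
  have : {v : Om | ∀ i < L, v i = w i} =
      ⋂ i ∈ Finset.range L, (fun v : Om => v i) ⁻¹' {w i} := by
    ext v
    simp [Finset.mem_range]
  rw [this]
  exact isOpen_biInter_finset fun i _ =>
    (continuous_apply i).isOpen_preimage _ (isOpen_discrete _)

theorem hard_dir (A : Set ℕ) (hrec : PointwiseRecurrent A) :
    ∀ B : Set ℕ, A ⊆ B →
      ∃ F : Finset ℕ, (∀ f ∈ F, f ∉ B) ∧ Thick (B ∪ ⋃ f ∈ F, NSub B f) := by
  intro B hAB
  by_contra hcon
  push_neg at hcon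
  set C : Set ℕ := {m | 0 < m ∧ m ∉ B} with hC
  have hs : Hs (C := C) := by
    intro F hFC
    have hFB : ∀ f ∈ F, f ∉ B := fun f hf => (hFC hf).2
    have hnt := hcon F hFB
    unfold Thick at hnt
    push_neg at hnt
    obtain ⟨G, hG⟩ := hnt
    refine ⟨G.sup id + 1, fun a => ?_⟩
    obtain ⟨f, hfG, hfnot⟩ := hG (a + 1) (by omega)
    have hfle : f ≤ G.sup id := Finset.le_sup (f := id) hfG
    simp only [Set.mem_union, Set.mem_iUnion, not_or, not_exists] at hfnot
    obtain ⟨hf1, hf2⟩ := hfnot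
    refine ⟨f + 1, by omega, by omega, ⟨by omega, ?_⟩, ?_⟩
    · rw [show a + (f + 1) = f + (a + 1) by omega]
      exact hf1
    · intro f' hf'F
      refine ⟨by omega, ?_⟩
      have := hf2 f'
      simp only [hf'F, NSub, Set.mem_setOf_eq, not_and] at this
      have h2 := this (by simp) (by omega)
      rw [show a + (f + 1) + f' = f + (a + 1) + f' by omega]
      exact h2
  -- the uniformly recurrent point and its orbit closure
  set x : Om := xpt C with hx
  set orb : Set Om := Set.range (fun n : ℕ => shift^[n] x) with horb
  set X : Set Om := closure orb with hX
  have hxX : x ∈ X := subset_closure ⟨0, rfl⟩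
  have hXinv : ∀ z ∈ X, shift z ∈ X := by
    intro z hz
    have h2 : shift '' orb ⊆ orb := by
      rintro _ ⟨_, ⟨n, rfl⟩, rfl⟩
      refine ⟨n + 1, ?_⟩
      show shift^[n + 1] x = shift (shift^[n] x)
      rw [Function.iterate_succ_apply']
    have h1 : shift z ∈ closure (shift '' orb) :=
      image_closure_subset_closure_image continuous_shift ⟨z, hz, rfl⟩
    exact closure_mono h2 h1
  letI : MetricSpace X := TopologicalSpace.metrizableSpaceMetric X
  haveI : CompactSpace X := isCompact_iff_compactSpace.mp (IsClosed.isCompact isClosed_closure)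
  haveI : Nonempty X := ⟨⟨x, hxX⟩⟩
  set mapX : X → X := fun z => ⟨shift z.1, hXinv z.1 z.2⟩ with hmapX
  have hmapXc : Continuous mapX :=
    Continuous.subtype_mk (continuous_shift.comp continuous_subtype_val) _
  set S : MetricDynSystem :=
    { carrier := X, map := mapX, continuous_map := hmapXc } with hS
  have hiter : ∀ (n : ℕ) (z : X), ((mapX^[n]) z).1 = shift^[n] z.1 := by
    intro n
    induction n with
    | zero => intro z; rfl
    | succ n ih =>
      intro z
      rw [Function.iterate_succ_apply', Function.iterate_succ_apply']
      show shift ((mapX^[n] z)).1 = shift (shift^[n] z.1)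
      rw [ih]
  have happrox : ∀ z ∈ X, ∀ L : ℕ, ∃ r : ℕ, ∀ i < L, z i = x (i + r) := by
    intro z hz L
    have hV : IsOpen {v : Om | ∀ i < L, v i = z i} := cylinder_open z L
    have hzV : z ∈ {v : Om | ∀ i < L, v i = z i} := fun i _ => rfl
    obtain ⟨w, hwV, hworb⟩ := _root_.mem_closure_iff.mp hz _ hV hzV
    obtain ⟨r, rfl⟩ := hworb
    exact ⟨r, fun i hi => by rw [← shift_iterate r x i]; exact (hwV i hi).symm⟩
  -- minimality
  have hmin : S.Minimal := by
    intro y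
    rw [dense_iff_inter_open]
    intro U hU hUne
    obtain ⟨V, hVopen, hVU⟩ := isOpen_induced_iff.mp hU
    obtain ⟨w, hwU⟩ := hUne
    have hwV : (w : Om) ∈ V := by rw [← hVU] at hwU; exact hwU
    obtain ⟨I, u, hu, husub⟩ := isOpen_pi_iff.mp hVopen w.1 hwV
    set L := I.sup id + 1 with hL
    have hcyl : ∀ v : Om, (∀ i < L, v i = w.1 i) → v ∈ V := by
      intro v hv
      apply husub
      intro i hiI
      have hiL : i < L := by
        have := Finset.le_sup (f := id) hiI
        simp only [id] at this
        omega
      show v i ∈ u i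
      rw [hv i hiL]
      exact (hu i hiI).2
    obtain ⟨r, hr⟩ := happrox w.1 w.2 L
    obtain ⟨K, hK⟩ := xpt_ur hs (r + L)
    obtain ⟨q, hq⟩ := happrox y.1 y.2 (K + (r + L) + 1)
    obtain ⟨s, hs1, hs2, hmatch⟩ := hK (q + 1)
    set n := s - q + r with hn
    refine ⟨mapX^[n] y, ?_, ⟨n, by omega, rfl⟩⟩
    rw [← hVU]
    show ((mapX^[n]) y).1 ∈ V
    rw [hiter]
    apply hcyl
    intro i hiL
    rw [shift_iterate]
    have e1 : i + n + q = s + (r + i) := by omega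
    have e2 : y.1 (i + n) = x (i + n + q) := hq (i + n) (by omega)
    rw [e2, e1]
    have e3 : x (s + (r + i)) = x (r + i) := hmatch (r + i) (by omega)
    rw [e3]
    have e4 : w.1 i = x (i + r) := hr i hiL
    rw [e4]
    congr 1
    omega
  -- apply pointwise recurrence
  set U0 : Set X := (fun z : X => z.1 0) ⁻¹' {true} with hU0
  have hU0open : IsOpen U0 :=
    (((continuous_apply 0).comp continuous_subtype_val)).isOpen_preimage _ (isOpen_discrete _)
  have hxU0 : (⟨x, hxX⟩ : X) ∈ U0 := by
    show x 0 = true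
    exact xpt_zero
  obtain ⟨n, hnA, hnpos, hnmem⟩ := hrec S hmin ⟨x, hxX⟩ U0 hU0open hxU0
  have hxn : x n = true := by
    have : ((mapX^[n]) ⟨x, hxX⟩).1 0 = true := hnmem
    rw [hiter, shift_iterate] at this
    simpa using this
  have hmemC : n ∈ C := xpt_supp hs n hnpos hxn
  exact hmemC.2 (hAB hnA)


end PR

theorem pointwiseRecurrent_iff_thick_characterization (A : Set ℕ) :
    PointwiseRecurrent A ↔
      ∀ B : Set ℕ, A ⊆ B →
        ∃ F : Finset ℕ, (∀ f ∈ F, f ∉ B) ∧ Thick (B ∪ ⋃ f ∈ F, NSub B f) := ⟨PR.hard_dir A, PR.easy_dir A⟩
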